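/- In the automaton A_1 of the previous construction, the maximum size of a synchronizing set consisting of states of the first layer {v^{(1)}_1, …, v^{(1)}_p} equals α(G), the independence number of G. -/

import Mathlib

def deltaStar {Q A : Type*} (δ : Q → A → Q) (q : Q) (w : List A) : Q :=
  w.foldl δ q

def IsSyncSet {Q A : Type*} (δ : Q → A → Q) (S : Set Q) : Prop :=
  ∃ (w : List A) (q : Q), ∀ s ∈ S, deltaStar δ s w = q

/-- States of the binary automaton A₁ built from a graph on p vertices:
layered states v i j (layer i, index j), absorbing states u i j, and a
p-state cycle c k whose state c 0 plays the role of f. -/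
inductive St1 (p : ℕ) : Type where
  | v : Fin p → Fin p → St1 p
  | u : Fin p → Fin p → St1 p
  | c : Fin p → St1 p
deriving DecidableEq

/-- Transitions of A₁ over the binary alphabet {0 = false, 1 = true}:
v i j goes to u i j on 0 iff i = j, and on 1 iff v_i v_j ∈ E; otherwise it
moves to the next layer (or to f = c 0 from the last layer); u-states have
self-loops; the c-states form a cycle on both letters. -/
def delta1 {p : ℕ} (G : SimpleGraph (Fin p)) [DecidableRel G.Adj] :
    St1 p → Bool → St1 p
  | St1.v i j, b =>
      if (b = false ∧ i = j) ∨ (b = true ∧ G.Adj i j) then St1.u i j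
      else if h : i.val + 1 < p then St1.v ⟨i.val + 1, h⟩ j else St1.c ⟨0, i.pos⟩
  | St1.u i j, _ => St1.u i j
  | St1.c k, _ => St1.c ⟨(k.val + 1) % p, Nat.mod_lt _ k.pos⟩

section Aux
variable {p : ℕ} (G : SimpleGraph (Fin p)) [DecidableRel G.Adj]

lemma deltaStar_cons {Q A : Type*} (δ : Q → A → Q) (q : Q) (b : A) (t : List A) :
    deltaStar δ q (b :: t) = deltaStar δ (δ q b) t := rfl

lemma u_run (i j : Fin p) (w : List Bool) :
    deltaStar (delta1 G) (St1.u i j) w = St1.u i j := by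
  induction w with
  | nil => rfl
  | cons b t ih => simpa [deltaStar_cons, delta1] using ih

def idx {p : ℕ} : St1 p → Option (Fin p)
  | St1.v _ j => some j
  | St1.u _ j => some j
  | St1.c _ => none

lemma idx_step (q : St1 p) (b : Bool) :
    idx (delta1 G q b) = idx q ∨ idx (delta1 G q b) = none := by
  cases q with
  | v i j =>
      simp only [delta1]
      split
      · left; rfl
      · split
        · left; rfl
        · right; rfl
  | u i j => left; rfl
  | c k => right; rfl

lemma idx_run (w : List Bool) : ∀ q : St1 p,
    idx (deltaStar (delta1 G) q w) = idx q ∨ idx (deltaStar (delta1 G) q w) = none := by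
  induction w with
  | nil => intro q; left; rfl
  | cons b t ih =>
      intro q
      rw [deltaStar_cons]
      rcases ih (delta1 G q b) with h | h
      · rcases idx_step G q b with h2 | h2
        · left; rw [h, h2]
        · right; rw [h, h2]
      · right; exact h

lemma run_nobad (hp : 0 < p) : ∀ (w : List Bool) (i : ℕ) (hi : i < p) (j : Fin p)
    (hlen : i + w.length = p),
    (∀ (k : ℕ) (hk : k < w.length),
      ¬ ((w.get ⟨k, hk⟩ = false ∧ (⟨i + k, by omega⟩ : Fin p) = j) ∨
         (w.get ⟨k, hk⟩ = true ∧ G.Adj ⟨i + k, by omega⟩ j))) →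
    deltaStar (delta1 G) (St1.v ⟨i, hi⟩ j) w = St1.c ⟨0, hp⟩ := by
  intro w
  induction w with
  | nil => intro i hi j hlen; simp at hlen; omega
  | cons b t ih =>
      intro i hi j hlen hgood
      rw [deltaStar_cons]
      have h0 : ¬ ((b = false ∧ (⟨i, hi⟩ : Fin p) = j) ∨ (b = true ∧ G.Adj ⟨i, hi⟩ j)) := by
        have := hgood 0 (by simp)
        simpa using this
      by_cases h1 : i + 1 < p
      · have hd : delta1 G (St1.v ⟨i, hi⟩ j) b = St1.v ⟨i + 1, h1⟩ j := by
          simp only [delta1]; rw [if_neg h0, dif_pos h1]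
        rw [hd]
        apply ih (i + 1) h1 j (by simp at hlen ⊢; omega)
        intro k hk
        have := hgood (k + 1) (by simp; omega)
        have he : i + 1 + k = i + (k + 1) := by omega
        simp only [List.get] at this ⊢
        convert this using 3 <;> simp [he]
      · have hd : delta1 G (St1.v ⟨i, hi⟩ j) b = St1.c ⟨0, hp⟩ := by
          simp only [delta1]; rw [if_neg h0, dif_neg h1]
        rw [hd]
        have ht : t = [] := by
          have : t.length = 0 := by simp at hlen; omega
          exact List.eq_nil_of_length_eq_zero this
        rw [ht]; rfl

lemma run_c : ∀ (w : List Bool) (i : ℕ) (hi : i < p) (j m : Fin p),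
    deltaStar (delta1 G) (St1.v ⟨i, hi⟩ j) w = St1.c m →
    p ≤ i + w.length ∧ ∀ (k : ℕ) (hk : k < w.length) (hik : i + k < p),
      ¬ ((w.get ⟨k, hk⟩ = false ∧ (⟨i + k, hik⟩ : Fin p) = j) ∨
         (w.get ⟨k, hk⟩ = true ∧ G.Adj ⟨i + k, hik⟩ j)) := by
  intro w
  induction w with
  | nil => intro i hi j m h; exact absurd h (by simp [deltaStar])
  | cons b t ih =>
      intro i hi j m h
      rw [deltaStar_cons] at h
      by_cases hbad : (b = false ∧ (⟨i, hi⟩ : Fin p) = j) ∨ (b = true ∧ G.Adj ⟨i, hi⟩ j)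
      · exfalso
        have hd : delta1 G (St1.v ⟨i, hi⟩ j) b = St1.u ⟨i, hi⟩ j := by
          simp only [delta1]; rw [if_pos hbad]
        rw [hd, u_run] at h
        cases h
      · by_cases h1 : i + 1 < p
        · have hd : delta1 G (St1.v ⟨i, hi⟩ j) b = St1.v ⟨i + 1, h1⟩ j := by
            simp only [delta1]; rw [if_neg hbad, dif_pos h1]
          rw [hd] at h
          obtain ⟨hlen, hgood⟩ := ih (i + 1) h1 j m h
          constructor
          · simp; omega
          · intro k hk hik
            match k with
            | 0 => simpa using hbad
            | Nat.succ k' =>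
                have := hgood k' (by simp at hk; omega) (by omega)
                have he : i + 1 + k' = i + (k' + 1) := by omega
                simp only [List.get] at this ⊢
                convert this using 3 <;> simp [he]
        · constructor
          · simp; omega
          · intro k hk hik
            match k with
            | 0 => simpa using hbad
            | Nat.succ k' => omega

end Aux

/-- The maximum size of a synchronizing set consisting of first-layer states
of A₁ equals the independence number α(G). -/
theorem stmt_13 {p : ℕ} (G : SimpleGraph (Fin p)) [DecidableRel G.Adj]
    (hp : 0 < p) (α : ℕ)
    (hα : IsGreatest {k | ∃ I : Finset (Fin p),
      (I : Set (Fin p)).Pairwise (fun a b => ¬ G.Adj a b) ∧ I.card = k} α)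
    (hα1 : 1 ≤ α) :
    IsGreatest {k | ∃ S : Set (St1 p),
      S ⊆ {q | ∃ j : Fin p, q = St1.v ⟨0, hp⟩ j} ∧
      IsSyncSet (delta1 G) S ∧ S.ncard = k} α := by
  obtain ⟨⟨I, hI, hIcard⟩, hub⟩ := hα
  have hinj : Function.Injective (fun j : Fin p => St1.v ⟨0, hp⟩ j) := by
    intro a b h
    injection h
  constructor
  · -- α is attained
    refine ⟨(fun j : Fin p => St1.v ⟨0, hp⟩ j) '' ↑I, ?_, ?_, ?_⟩
    · rintro q ⟨j, hj, rfl⟩; exact ⟨j, rfl⟩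
    · refine ⟨List.ofFn (fun i : Fin p => decide (i ∈ I)), St1.c ⟨0, hp⟩, ?_⟩
      rintro s ⟨j, hj, rfl⟩
      apply run_nobad G hp _ 0 hp j (by simp)
      intro k hk
      have hkp : k < p := by simpa using hk
      have hw : (List.ofFn (fun i : Fin p => decide (i ∈ I))).get ⟨k, hk⟩ =
          decide ((⟨k, hkp⟩ : Fin p) ∈ I) := by
        simp [List.get_ofFn]
      have hfin : (⟨0 + k, by omega⟩ : Fin p) = (⟨k, hkp⟩ : Fin p) := by
        apply Fin.ext; simp
      rw [hw, hfin]
      by_cases hmem : (⟨k, hkp⟩ : Fin p) ∈ I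
      · simp only [hmem, decide_eq_true_eq, decide_true]
        rintro (⟨hfalse, -⟩ | ⟨-, hadj⟩)
        · exact Bool.noConfusion hfalse
        · by_cases heq : (⟨k, hkp⟩ : Fin p) = j
          · exact G.loopless.irrefl j (heq ▸ hadj)
          · exact hI hmem hj heq hadj
      · simp only [hmem, decide_false]
        rintro (⟨-, heq⟩ | ⟨htrue, -⟩)
        · exact hmem (heq ▸ hj)
        · exact Bool.noConfusion htrue
    · rw [Set.ncard_image_of_injective _ hinj, Set.ncard_coe_finset, hIcard]
  · -- α is an upper bound
    rintro k ⟨S, hSsub, ⟨w, q, hsync⟩, rfl⟩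
    set J : Set (Fin p) := {j | St1.v ⟨0, hp⟩ j ∈ S} with hJ
    have hSJ : S = (fun j : Fin p => St1.v ⟨0, hp⟩ j) '' J := by
      ext s
      constructor
      · intro hs
        obtain ⟨j, rfl⟩ := hSsub hs
        exact ⟨j, hs, rfl⟩
      · rintro ⟨j, hj, rfl⟩; exact hj
    have hJpair : J.Pairwise (fun a b => ¬ G.Adj a b) := by
      intro j hj j' hj' hne hadj
      have hrj : deltaStar (delta1 G) (St1.v ⟨0, hp⟩ j) w = q := hsync _ hj
      have hrj' : deltaStar (delta1 G) (St1.v ⟨0, hp⟩ j') w = q := hsync _ hj'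
      -- q must be a c-state
      have hqc : ∃ m, q = St1.c m := by
        rcases idx_run G w (St1.v ⟨0, hp⟩ j) with h1 | h1 <;>
        rcases idx_run G w (St1.v ⟨0, hp⟩ j') with h2 | h2 <;>
        rw [hrj] at h1 <;> rw [hrj'] at h2
        · exfalso
          rw [h1] at h2
          simp only [idx] at h2
          exact hne (Option.some_injective _ h2)
        all_goals
          cases q with
          | v a b => simp [idx] at *
          | u a b => simp [idx] at *
          | c m => exact ⟨m, rfl⟩
      obtain ⟨m, rfl⟩ := hqc
      obtain ⟨hlen, hgood⟩ := run_c G w 0 hp j m hrj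
      obtain ⟨hlen', hgood'⟩ := run_c G w 0 hp j' m hrj'
      have hkw : (j' : ℕ) < w.length := by
        have := j'.isLt; omega
      have hfin : (⟨0 + (j' : ℕ), by omega⟩ : Fin p) = j' := by
        apply Fin.ext; simp
      have hg := hgood (j' : ℕ) hkw (by have := j'.isLt; omega)
      have hg' := hgood' (j' : ℕ) hkw (by have := j'.isLt; omega)
      rw [hfin] at hg hg'
      cases hb : w.get ⟨(j' : ℕ), hkw⟩ with
      | false => exact hg' (Or.inl ⟨hb, rfl⟩)
      | true => exact hg (Or.inr ⟨hb, hadj.symm⟩)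
    apply hub
    refine ⟨(Set.toFinite J).toFinset, ?_, ?_⟩
    · rwa [Set.Finite.coe_toFinset]
    · rw [hSJ, Set.ncard_image_of_injective _ hinj]
      exact (Set.ncard_eq_toFinset_card J (Set.toFinite J)).symm
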